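/- Non-uniqueness for the adhesive beam problem: Let L > 0, ρ = μ = 1, and let Φ₀ be the prototype adhesive potential. Define u(t,x) = cos(√2·t) and v(t,x) = 1 for (t,x) ∈ [0,∞)×[0,L]. Then u ≠ v; both satisfy the same initial conditions u(0,x) = v(0,x) = 1 and ∂_t u(0,x) = ∂_t v(0,x) = 0 and (trivially, being independent of x) the free-end boundary conditions ∂²ₓ = ∂³ₓ = 0 at x = 0, L; and there exist functions h_u, h_v : [0,∞)×[0,L] → ℝ with h_u(t,x) ∈ ∂Φ₀'(u(t,x)) and h_v(t,x) ∈ ∂Φ₀'(v(t,x)) for every (t,x) (one may take h_u(t,x) = 2cos(√2·t) and h_v ≡ 0), such that ∂²_t u(t,x) = −∂⁴ₓu(t,x) − h_u(t,x) and ∂²_t v(t,x) = −∂⁴ₓv(t,x) − h_v(t,x) pointwise for all t > 0 and 0 < x < L. Hence the adhesive beam initial value problem with data u₀ ≡ 1, u₁ ≡ 0 admits two distinct solutions. -/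

import Mathlib

open MeasureTheory Filter Set intervalIntegral Real

/-- The prototype adhesive potential `Φ₀(s) = s²` for `|s| ≤ 1`, `Φ₀(s) = 1` for `|s| > 1`. -/
noncomputable def Phi0 (s : ℝ) : ℝ := if |s| ≤ 1 then s ^ 2 else 1

/-- The subdifferential of the prototype adhesive force `Φ₀'`:
`∂Φ₀'(s) = {2s}` for `|s| < 1`, `{0}` for `|s| > 1`, `[0,2]` at `s = 1` and `[-2,0]` at
`s = -1`. -/
noncomputable def subdiffPhi0 (s : ℝ) : Set ℝ :=
  if |s| < 1 then {2 * s}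
  else if s = 1 then Icc 0 2
  else if s = -1 then Icc (-2) 0
  else {0}

lemma cosD (t : ℝ) :
    HasDerivAt (fun τ => Real.cos (Real.sqrt 2 * τ))
      (-(Real.sqrt 2 * Real.sin (Real.sqrt 2 * t))) t := by
  have h := (Real.hasDerivAt_cos (Real.sqrt 2 * t)).comp t
    ((hasDerivAt_id t).const_mul (Real.sqrt 2))
  simp only [Function.comp_def, id_eq] at h
  refine h.congr_deriv ?_
  ring

lemma sinD (t : ℝ) :
    HasDerivAt (fun τ => Real.sin (Real.sqrt 2 * τ))
      (Real.sqrt 2 * Real.cos (Real.sqrt 2 * t)) t := by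
  have h := (Real.hasDerivAt_sin (Real.sqrt 2 * t)).comp t
    ((hasDerivAt_id t).const_mul (Real.sqrt 2))
  simp only [Function.comp_def, id_eq] at h
  refine h.congr_deriv ?_
  ring

lemma cosDeriv' :
    deriv (fun τ => Real.cos (Real.sqrt 2 * τ))
      = fun t => -(Real.sqrt 2 * Real.sin (Real.sqrt 2 * t)) :=
  funext fun t => (cosD t).deriv

lemma cosDeriv2 (t : ℝ) :
    deriv (deriv (fun τ => Real.cos (Real.sqrt 2 * τ))) t
      = -2 * Real.cos (Real.sqrt 2 * t) := by
  rw [cosDeriv']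
  have h2 : HasDerivAt (fun τ => -(Real.sqrt 2 * Real.sin (Real.sqrt 2 * τ)))
      (-2 * Real.cos (Real.sqrt 2 * t)) t := by
    have h := ((sinD t).const_mul (Real.sqrt 2)).neg
    have hs : Real.sqrt 2 * Real.sqrt 2 = 2 := Real.mul_self_sqrt (by norm_num)
    refine h.congr_deriv ?_
    linear_combination (-Real.cos (Real.sqrt 2 * t)) * hs
  exact h2.deriv

lemma mem_subdiff_cos (θ : ℝ) : 2 * Real.cos θ ∈ subdiffPhi0 (Real.cos θ) := by
  unfold subdiffPhi0
  rcases lt_or_eq_of_le (Real.abs_cos_le_one θ) with h | h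
  · simp [h]
  · rcases (abs_eq (by norm_num : (0:ℝ) ≤ 1)).mp h with h1 | h1 <;> rw [h1] <;> norm_num

lemma itconst (c : ℝ) (n : ℕ) : iteratedDeriv (n + 1) (fun _ : ℝ => c) = fun _ => 0 := by
  induction n with
  | zero => simp [iteratedDeriv_one]
  | succ n ih => rw [iteratedDeriv_succ, ih]; simp

/-- **Non-uniqueness for the adhesive beam problem.**  With `ρ = μ = 1` and the prototype
adhesive potential, the two distinct functions `u(t,x) = cos(√2 t)` and `v(t,x) = 1` both
solve the adhesive beam problem (with suitable selections `h_u ∈ ∂Φ₀'(u)`,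
`h_v ∈ ∂Φ₀'(v)`) with the same initial data `u₀ ≡ 1`, `u₁ ≡ 0` and the free-end boundary
conditions. -/
theorem non_uniqueness_adhesive_beam
    (L : ℝ) (hL : 0 < L)
    (u v : ℝ → ℝ → ℝ)
    (hu : ∀ t x, u t x = Real.cos (Real.sqrt 2 * t))
    (hv : ∀ t x, v t x = 1) :
    -- the two solutions are distinct
    u ≠ v ∧
    -- same initial data u₀ ≡ 1, u₁ ≡ 0
    (∀ x ∈ Icc 0 L, u 0 x = 1 ∧ v 0 x = 1 ∧
      deriv (fun τ => u τ x) 0 = 0 ∧ deriv (fun τ => v τ x) 0 = 0) ∧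
    -- free-end boundary conditions
    (∀ t ∈ Ioi (0:ℝ),
      iteratedDeriv 2 (fun y => u t y) 0 = 0 ∧ iteratedDeriv 2 (fun y => u t y) L = 0 ∧
      iteratedDeriv 3 (fun y => u t y) 0 = 0 ∧ iteratedDeriv 3 (fun y => u t y) L = 0 ∧
      iteratedDeriv 2 (fun y => v t y) 0 = 0 ∧ iteratedDeriv 2 (fun y => v t y) L = 0 ∧
      iteratedDeriv 3 (fun y => v t y) 0 = 0 ∧ iteratedDeriv 3 (fun y => v t y) L = 0) ∧
    -- both solve the adhesive beam equation for suitable selections of the subdifferential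
    (∃ hu' hv' : ℝ → ℝ → ℝ,
      (∀ t x, hu' t x ∈ subdiffPhi0 (u t x)) ∧
      (∀ t x, hv' t x ∈ subdiffPhi0 (v t x)) ∧
      (∀ t x, hu' t x = 2 * Real.cos (Real.sqrt 2 * t)) ∧
      (∀ t x, hv' t x = 0) ∧
      (∀ t ∈ Ioi (0:ℝ), ∀ x ∈ Ioo 0 L,
        deriv (deriv (fun τ => u τ x)) t
          = -(iteratedDeriv 4 (fun y => u t y) x) - hu' t x) ∧
      (∀ t ∈ Ioi (0:ℝ), ∀ x ∈ Ioo 0 L,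
        deriv (deriv (fun τ => v τ x)) t
          = -(iteratedDeriv 4 (fun y => v t y) x) - hv' t x)) := by
  have hs2 : Real.sqrt 2 ≠ 0 := by positivity
  have hufun : ∀ x, (fun τ => u τ x) = fun τ => Real.cos (Real.sqrt 2 * τ) :=
    fun x => funext fun τ => hu τ x
  have hvfun : ∀ x, (fun τ => v τ x) = fun _ => (1 : ℝ) :=
    fun x => funext fun τ => hv τ x
  have huconst : ∀ t, (fun y => u t y) = fun _ : ℝ => Real.cos (Real.sqrt 2 * t) :=
    fun t => funext fun y => hu t y
  have hvconst : ∀ t, (fun y => v t y) = fun _ : ℝ => (1 : ℝ) :=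
    fun t => funext fun y => hv t y
  refine ⟨?_, ?_, ?_, ?_⟩
  · intro heq
    have h0 := congrFun (congrFun heq (Real.pi / Real.sqrt 2)) 0
    rw [hu, hv, mul_div_cancel₀ _ hs2, Real.cos_pi] at h0
    norm_num at h0
  · intro x _
    refine ⟨by simp [hu], hv 0 x, ?_, ?_⟩
    · rw [hufun x, cosDeriv']
      simp
    · rw [hvfun x]
      simp
  · intro t _
    rw [huconst t, hvconst t]
    refine ⟨?_, ?_, ?_, ?_, ?_, ?_, ?_, ?_⟩ <;>
      simp [show (2:ℕ) = 1 + 1 from rfl, show (3:ℕ) = 2 + 1 from rfl, itconst]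
  · refine ⟨fun t _ => 2 * Real.cos (Real.sqrt 2 * t), fun _ _ => 0,
      fun t x => ?_, fun t x => ?_, fun _ _ => rfl, fun _ _ => rfl, ?_, ?_⟩
    · rw [hu t x]; exact mem_subdiff_cos _
    · rw [hv t x]
      unfold subdiffPhi0
      norm_num
    · intro t _ x _
      rw [hufun x, huconst t, cosDeriv2, itconst]
      ring
    · intro t _ x _
      rw [hvfun x, hvconst t, itconst]
      simp
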